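/- Let M ⊆ ℝ^N be a nonempty set, let L_M be its affine span and d the dimension of the direction submodule of L_M. Define T = {i | there exists v ∈ M with v_i ≠ 0}. Then the set {v ∈ M | supp(v) ≠ T} has d-dimensional Hausdorff measure zero; that is, for almost all v ∈ M (with respect to μH[d]), v_i ≠ 0 for every i ∈ T and v_i = 0 for every i ∉ T. (Equation (4) of the paper: almost all steady states have exactly the typical set of active fluxes.) -/

import Mathlib

open MeasureTheory Set Module Real
open scoped ENNReal NNReal

private lemma dimH_submodule_le {N : ℕ} (K : Submodule ℝ (Fin N → ℝ)) :
    dimH (K : Set (Fin N → ℝ)) ≤ finrank ℝ K := by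
  have h : (K : Set (Fin N → ℝ)) = Set.range ((↑) : K → Fin N → ℝ) :=
    Subtype.range_coe.symm
  rw [h]
  have hiso : Isometry ((↑) : K → Fin N → ℝ) := isometry_subtype_coe
  calc dimH (Set.range ((↑) : K → Fin N → ℝ))
      ≤ dimH (Set.univ : Set K) := LipschitzWith.dimH_range_le hiso.lipschitz
    _ = finrank ℝ K := dimH_univ_eq_finrank K

private lemma dimH_affineSubspace_le {N : ℕ} (S : AffineSubspace ℝ (Fin N → ℝ))
    (hS : (S : Set (Fin N → ℝ)).Nonempty) :
    dimH (S : Set (Fin N → ℝ)) ≤ finrank ℝ S.direction := by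
  obtain ⟨p, hp⟩ := hS
  have himg : (S : Set (Fin N → ℝ)) =
      (fun w => w + p) '' (S.direction : Set (Fin N → ℝ)) := by
    ext v
    constructor
    · intro hv
      exact ⟨v - p, AffineSubspace.vsub_mem_direction hv hp, by simp⟩
    · rintro ⟨w, hw, rfl⟩
      exact AffineSubspace.vadd_mem_of_mem_direction hw hp
  rw [himg]
  have hiso : Isometry (fun w : Fin N → ℝ => w + p) := Isometry.of_dist_eq fun a b => by
    simp [dist_eq_norm]
  calc dimH ((fun w => w + p) '' (S.direction : Set (Fin N → ℝ)))
      = dimH (S.direction : Set (Fin N → ℝ)) := hiso.dimH_image _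
    _ ≤ finrank ℝ S.direction := dimH_submodule_le _

/-- **Equation (4) of the paper.** Let `M ⊆ ℝ^N` be nonempty with affine span of
direction dimension `d`, and let `T = {i | ∃ v ∈ M, v i ≠ 0}`. Then almost all
`v ∈ M` (w.r.t. `d`-dimensional Hausdorff measure) have support exactly `T`: the set
of `v ∈ M` whose support differs from `T` has measure zero. -/
theorem almost_all_have_typical_support (N : ℕ) (M : Set (Fin N → ℝ))
    (hM : M.Nonempty) :
    μH[(Module.finrank ℝ (affineSpan ℝ M).direction : ℝ)]
      {v ∈ M | {i : Fin N | v i ≠ 0} ≠ {i : Fin N | ∃ w ∈ M, w i ≠ 0}} = 0 := by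
  set d : ℕ := Module.finrank ℝ (affineSpan ℝ M).direction with hd
  -- the bad set is contained in the union over coordinates i of
  -- points of the affine span with i-th coordinate zero, while some w ∈ M has w i ≠ 0
  set C : Fin N → Set (Fin N → ℝ) := fun i =>
    {v | v ∈ (affineSpan ℝ M : Set (Fin N → ℝ)) ∧ v i = 0 ∧ ∃ w ∈ M, w i ≠ 0} with hC
  have hsub : {v ∈ M | {i : Fin N | v i ≠ 0} ≠ {i : Fin N | ∃ w ∈ M, w i ≠ 0}} ⊆
      ⋃ i, C i := by
    rintro v ⟨hvM, hne⟩
    have hsubT : {i : Fin N | v i ≠ 0} ⊆ {i : Fin N | ∃ w ∈ M, w i ≠ 0} :=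
      fun i hi => ⟨v, hvM, hi⟩
    obtain ⟨i, hiT, hvi⟩ : ∃ i, (∃ w ∈ M, w i ≠ 0) ∧ ¬ v i ≠ 0 := by
      by_contra h
      push_neg at h
      exact hne (Set.Subset.antisymm hsubT fun i hi => h i hi)
    refine Set.mem_iUnion.2 ⟨i, subset_affineSpan ℝ M hvM, not_not.1 hvi, hiT⟩
  refine measure_mono_null hsub (measure_iUnion_null fun i => ?_)
  by_cases hT : ∃ w ∈ M, w i ≠ 0
  · -- the hyperplane {v | v i = 0} as an affine subspace
    set H : AffineSubspace ℝ (Fin N → ℝ) :=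
      (LinearMap.ker (LinearMap.proj i : (Fin N → ℝ) →ₗ[ℝ] ℝ)).toAffineSubspace with hH
    set S : AffineSubspace ℝ (Fin N → ℝ) := affineSpan ℝ M ⊓ H with hS
    have hCS : C i ⊆ (S : Set (Fin N → ℝ)) := by
      rintro v ⟨hv1, hv2, -⟩
      exact ⟨hv1, by simpa [hH, Submodule.mem_toAffineSubspace] using hv2⟩
    rcases Set.eq_empty_or_nonempty (S : Set (Fin N → ℝ)) with hemp | hne
    · exact measure_mono_null (hCS.trans hemp.subset) measure_empty
    · obtain ⟨w, hwM, hwi⟩ := hT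
      have hlt : S < affineSpan ℝ M := by
        refine lt_of_le_of_ne inf_le_left fun h => ?_
        have hw : w ∈ S := h ▸ subset_affineSpan ℝ M hwM
        exact hwi (by simpa [hH, Submodule.mem_toAffineSubspace] using hw.2)
      have hdirlt : S.direction < (affineSpan ℝ M).direction :=
        AffineSubspace.direction_lt_of_nonempty hlt hne
      have hrk : finrank ℝ S.direction < d :=
        Submodule.finrank_lt_finrank_of_lt hdirlt
      have hdimH : dimH (S : Set (Fin N → ℝ)) < (d : ℝ≥0∞) :=
        lt_of_le_of_lt (dimH_affineSubspace_le S hne) (by exact_mod_cast hrk)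
      have h0 : μH[((d : ℝ≥0) : ℝ)] (S : Set (Fin N → ℝ)) = 0 :=
        hausdorffMeasure_of_dimH_lt (by exact_mod_cast hdimH)
      have h0' : μH[(d : ℝ)] (S : Set (Fin N → ℝ)) = 0 := by
        convert h0 using 2
        rw [NNReal.coe_natCast]
      exact measure_mono_null hCS h0'
  · have : C i = ∅ := by
      ext v; simp only [hC, Set.mem_setOf_eq, Set.mem_empty_iff_false, iff_false]
      rintro ⟨-, -, h⟩; exact hT h
    rw [this]; exact measure_empty
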